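/- Let Q be a medial quandle in which every orbit, as a subquandle, is latin. Then: (1) all orbit groups of Q are isomorphic as abelian groups; (2) all orbits of Q are isomorphic as quandles. -/

import Mathlib

/-- The set of left translations of a binary algebra `(Q, op)`, viewed as permutations:
permutations `f` such that `f x = op a x` for some `a`. -/
def translations {Q : Type*} (op : Q → Q → Q) : Set (Equiv.Perm Q) :=
  { f | ∃ a : Q, ∀ x : Q, f x = op a x }

/-- The (left) multiplication group `LMlt(Q)`: the subgroup of the symmetric group
generated by the left translations. -/
def LMlt {Q : Type*} (op : Q → Q → Q) : Subgroup (Equiv.Perm Q) :=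
  Subgroup.closure (translations op)

/-- The displacement group `Dis(Q)`: the subgroup generated by all `L_a * L_b⁻¹`. -/
def Dis {Q : Type*} (op : Q → Q → Q) : Subgroup (Equiv.Perm Q) :=
  Subgroup.closure { f | ∃ g ∈ translations op, ∃ h ∈ translations op, f = g * h⁻¹ }

/-- `(Q, op)` is a quandle: idempotent, left distributive, left quasigroup. -/
def IsQuandle {Q : Type*} (op : Q → Q → Q) : Prop :=
  (∀ x, op x x = x) ∧
  (∀ x y z, op x (op y z) = op (op x y) (op x z)) ∧
  (∀ x y, ∃! u, op x u = y)

/-- `(Q, op)` is medial. -/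
def IsMedial {Q : Type*} (op : Q → Q → Q) : Prop :=
  ∀ x y u v, op (op x y) (op u v) = op (op x u) (op y v)

/-- The orbit of `e` under the multiplication group. -/
def qOrbit {Q : Type*} (op : Q → Q → Q) (e : Q) : Set Q :=
  { y | ∃ f ∈ LMlt op, f e = y }

/-- The orbit of `e` under the displacement group. -/
def disOrbit {Q : Type*} (op : Q → Q → Q) (e : Q) : Set Q :=
  { y | ∃ f ∈ Dis op, f e = y }


namespace Prop52

variable {Q : Type*} {op : Q → Q → Q}

lemma perm_apply_inv_self (f : Equiv.Perm Q) (x : Q) : f (f⁻¹ x) = x :=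
  Equiv.apply_symm_apply f x

lemma perm_inv_apply_self (f : Equiv.Perm Q) (x : Q) : f⁻¹ (f x) = x :=
  Equiv.symm_apply_apply f x

lemma lcancel (hQ : IsQuandle op) {a x y : Q} (h : op a x = op a y) : x = y := by
  obtain ⟨u, _, huniq⟩ := hQ.2.2 a (op a y)
  exact (huniq x h).trans (huniq y rfl).symm

lemma lbij (hQ : IsQuandle op) (a : Q) : Function.Bijective (op a) :=
  ⟨fun _ _ h => lcancel hQ h, fun y => (hQ.2.2 a y).exists⟩

noncomputable def Lp (hQ : IsQuandle op) (a : Q) : Equiv.Perm Q :=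
  Equiv.ofBijective (op a) (lbij hQ a)

@[simp] lemma Lp_apply (hQ : IsQuandle op) (a x : Q) : Lp hQ a x = op a x := rfl

lemma Lp_mem_translations (hQ : IsQuandle op) (a : Q) : Lp hQ a ∈ translations op :=
  ⟨a, fun _ => rfl⟩

lemma translations_eq (hQ : IsQuandle op) {f : Equiv.Perm Q} (hf : f ∈ translations op) :
    ∃ a, f = Lp hQ a := by
  obtain ⟨a, ha⟩ := hf; exact ⟨a, Equiv.ext ha⟩

lemma gen_mem_Dis (hQ : IsQuandle op) (a b : Q) : Lp hQ a * (Lp hQ b)⁻¹ ∈ Dis op :=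
  Subgroup.subset_closure ⟨_, Lp_mem_translations hQ a, _, Lp_mem_translations hQ b, rfl⟩

lemma lemM (hQ : IsQuandle op) (hM : IsMedial op) (x u y : Q) :
    Lp hQ (op x u) * Lp hQ y = Lp hQ (op x y) * Lp hQ u := by
  ext v
  simpa using hM x u y v

lemma Lp_op (hQ : IsQuandle op) (x y : Q) :
    Lp hQ (op x y) = Lp hQ x * Lp hQ y * (Lp hQ x)⁻¹ := by
  ext v
  simp only [Equiv.Perm.mul_apply, Lp_apply]
  rw [hQ.2.1]
  congr 1
  exact (perm_apply_inv_self (Lp hQ x) v).symm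

lemma lemM' (hQ : IsQuandle op) (hM : IsMedial op) (u x y : Q) :
    Lp hQ u * (Lp hQ x)⁻¹ * Lp hQ y = Lp hQ y * (Lp hQ x)⁻¹ * Lp hQ u := by
  have h := lemM hQ hM x u y
  rw [Lp_op hQ x u, Lp_op hQ x y] at h
  refine mul_left_cancel (a := Lp hQ x) ?_
  simpa [mul_assoc] using h

def IsHom (op : Q → Q → Q) (φ : Equiv.Perm Q) : Prop :=
  ∀ x y, φ (op x y) = op (φ x) (φ y)

lemma isHom_Lp (hQ : IsQuandle op) (a : Q) : IsHom op (Lp hQ a) := fun x y => hQ.2.1 a x y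

lemma isHom_mul {φ ψ : Equiv.Perm Q} (h1 : IsHom op φ) (h2 : IsHom op ψ) : IsHom op (φ * ψ) :=
  fun x y => by simp only [Equiv.Perm.mul_apply]; rw [h2]; exact h1 _ _

lemma isHom_inv {φ : Equiv.Perm Q} (h : IsHom op φ) : IsHom op φ⁻¹ := fun x y => by
  apply φ.injective
  rw [perm_apply_inv_self, h, perm_apply_inv_self, perm_apply_inv_self]

lemma isHom_dis (hQ : IsQuandle op) {σ : Equiv.Perm Q} (h : σ ∈ Dis op) : IsHom op σ := by
  induction h using Subgroup.closure_induction with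
  | mem x hx =>
    obtain ⟨g, hg, h', hh, rfl⟩ := hx
    obtain ⟨a, rfl⟩ := translations_eq hQ hg
    obtain ⟨b, rfl⟩ := translations_eq hQ hh
    exact isHom_mul (isHom_Lp hQ a) (isHom_inv (isHom_Lp hQ b))
  | one => exact fun x y => rfl
  | mul x y _ _ hx hy => exact isHom_mul hx hy
  | inv x _ hx => exact isHom_inv hx

lemma hom_conj (hQ : IsQuandle op) {φ : Equiv.Perm Q} (hφ : IsHom op φ) (a : Q) :
    φ * Lp hQ a * φ⁻¹ = Lp hQ (φ a) := by
  ext x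
  simp only [Equiv.Perm.mul_apply, Lp_apply]
  rw [hφ, perm_apply_inv_self]

lemma inv_mul_mem_Dis (hQ : IsQuandle op) (a b : Q) : (Lp hQ b)⁻¹ * Lp hQ a ∈ Dis op := by
  have h := hom_conj hQ (isHom_inv (isHom_Lp hQ b)) a
  rw [inv_inv] at h
  have : (Lp hQ b)⁻¹ * Lp hQ a = Lp hQ ((Lp hQ b)⁻¹ a) * (Lp hQ b)⁻¹ := by
    rw [← h]; group
  rw [this]
  exact gen_mem_Dis hQ _ _

lemma gen_comm (hQ : IsQuandle op) (hM : IsMedial op) (a b c d : Q) :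
    (Lp hQ a * (Lp hQ b)⁻¹) * (Lp hQ c * (Lp hQ d)⁻¹)
      = (Lp hQ c * (Lp hQ d)⁻¹) * (Lp hQ a * (Lp hQ b)⁻¹) := by
  have h1 := lemM' hQ hM a b c
  have h2 := lemM' hQ hM d b a
  have key : (Lp hQ b)⁻¹ * Lp hQ a * (Lp hQ d)⁻¹ = (Lp hQ d)⁻¹ * (Lp hQ a * (Lp hQ b)⁻¹) := by
    have := congrArg (fun z => (Lp hQ d)⁻¹ * z * (Lp hQ d)⁻¹) h2
    simp only [mul_assoc, inv_mul_cancel_left, mul_inv_cancel_right] at this ⊢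
    simpa [mul_assoc] using this
  calc Lp hQ a * (Lp hQ b)⁻¹ * (Lp hQ c * (Lp hQ d)⁻¹)
      = (Lp hQ a * (Lp hQ b)⁻¹ * Lp hQ c) * (Lp hQ d)⁻¹ := by group
    _ = (Lp hQ c * (Lp hQ b)⁻¹ * Lp hQ a) * (Lp hQ d)⁻¹ := by rw [h1]
    _ = Lp hQ c * ((Lp hQ b)⁻¹ * Lp hQ a * (Lp hQ d)⁻¹) := by group
    _ = Lp hQ c * ((Lp hQ d)⁻¹ * (Lp hQ a * (Lp hQ b)⁻¹)) := by rw [key]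
    _ = Lp hQ c * (Lp hQ d)⁻¹ * (Lp hQ a * (Lp hQ b)⁻¹) := by group

lemma gen_comm_dis (hQ : IsQuandle op) (hM : IsMedial op) {s τ : Equiv.Perm Q}
    (hs : s ∈ { f | ∃ g ∈ translations op, ∃ h ∈ translations op, f = g * h⁻¹ })
    (hτ : τ ∈ Dis op) : Commute s τ := by
  induction hτ using Subgroup.closure_induction with
  | mem t ht =>
    obtain ⟨g, hg, h', hh, rfl⟩ := hs
    obtain ⟨a, rfl⟩ := translations_eq hQ hg
    obtain ⟨b, rfl⟩ := translations_eq hQ hh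
    obtain ⟨g2, hg2, h2, hh2, rfl⟩ := ht
    obtain ⟨c, rfl⟩ := translations_eq hQ hg2
    obtain ⟨d, rfl⟩ := translations_eq hQ hh2
    exact gen_comm hQ hM a b c d
  | one => exact Commute.one_right _
  | mul x y _ _ hx hy => exact hx.mul_right hy
  | inv x _ hx => exact hx.inv_right

lemma dis_comm (hQ : IsQuandle op) (hM : IsMedial op) {σ τ : Equiv.Perm Q}
    (hσ : σ ∈ Dis op) (hτ : τ ∈ Dis op) : σ * τ = τ * σ := by
  induction hσ using Subgroup.closure_induction with
  | mem s hs => exact gen_comm_dis hQ hM hs hτ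
  | one => exact Commute.one_left _
  | mul x y _ _ hx hy => exact Commute.mul_left hx hy
  | inv x _ hx => exact Commute.inv_left hx

lemma conj_indep (hQ : IsQuandle op) (hM : IsMedial op) {σ : Equiv.Perm Q}
    (hσ : σ ∈ Dis op) (e f : Q) :
    Lp hQ e * σ * (Lp hQ e)⁻¹ = Lp hQ f * σ * (Lp hQ f)⁻¹ := by
  have hc : σ * ((Lp hQ f)⁻¹ * Lp hQ e) = ((Lp hQ f)⁻¹ * Lp hQ e) * σ :=
    dis_comm hQ hM hσ (inv_mul_mem_Dis hQ e f)
  have := congrArg (fun z => Lp hQ f * z * (Lp hQ e)⁻¹) hc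
  simpa [mul_assoc] using this.symm

lemma conj_mem_Dis (hQ : IsQuandle op) {σ : Equiv.Perm Q} (hσ : σ ∈ Dis op) (e : Q) :
    Lp hQ e * σ * (Lp hQ e)⁻¹ ∈ Dis op := by
  induction hσ using Subgroup.closure_induction with
  | mem s hs =>
    obtain ⟨g, hg, h', hh, rfl⟩ := hs
    obtain ⟨a, rfl⟩ := translations_eq hQ hg
    obtain ⟨b, rfl⟩ := translations_eq hQ hh
    have : Lp hQ e * (Lp hQ a * (Lp hQ b)⁻¹) * (Lp hQ e)⁻¹
        = (Lp hQ e * Lp hQ a * (Lp hQ e)⁻¹) * (Lp hQ e * Lp hQ b * (Lp hQ e)⁻¹)⁻¹ := by group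
    rw [this, hom_conj hQ (isHom_Lp hQ e), hom_conj hQ (isHom_Lp hQ e)]
    exact gen_mem_Dis hQ _ _
  | one => simpa using one_mem _
  | mul x y _ _ hx hy =>
    have : Lp hQ e * (x * y) * (Lp hQ e)⁻¹
        = (Lp hQ e * x * (Lp hQ e)⁻¹) * (Lp hQ e * y * (Lp hQ e)⁻¹) := by group
    rw [this]; exact mul_mem hx hy
  | inv x _ hx =>
    have : Lp hQ e * x⁻¹ * (Lp hQ e)⁻¹ = (Lp hQ e * x * (Lp hQ e)⁻¹)⁻¹ := by group
    rw [this]; exact inv_mem hx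

lemma self_mem_disOrbit (e : Q) : e ∈ disOrbit op e := ⟨1, one_mem _, rfl⟩

lemma apply_mem_disOrbit {σ : Equiv.Perm Q} (hσ : σ ∈ Dis op) {x e : Q}
    (hx : x ∈ disOrbit op e) : σ x ∈ disOrbit op e := by
  obtain ⟨τ, hτ, rfl⟩ := hx; exact ⟨σ * τ, mul_mem hσ hτ, rfl⟩

lemma Lp_inv_self (hQ : IsQuandle op) (x : Q) : (Lp hQ x)⁻¹ x = x := by
  have h := perm_inv_apply_self (Lp hQ x) x
  rw [show Lp hQ x x = x from hQ.1 x] at h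
  exact h

lemma op_mem_disOrbit (hQ : IsQuandle op) (a : Q) {x e : Q} (hx : x ∈ disOrbit op e) :
    op a x ∈ disOrbit op e := by
  obtain ⟨τ, hτ, rfl⟩ := hx
  refine ⟨Lp hQ a * (Lp hQ (τ e))⁻¹ * τ, mul_mem (gen_mem_Dis hQ _ _) hτ, ?_⟩
  simp only [Equiv.Perm.mul_apply]
  rw [Lp_inv_self hQ]
  rfl

lemma fix_transfer (hQ : IsQuandle op) (hM : IsMedial op)
    (hlatin : ∀ e : Q, ∀ a ∈ disOrbit op e,
      Set.BijOn (fun x => op x a) (disOrbit op e) (disOrbit op e))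
    {σ : Equiv.Perm Q} (hσ : σ ∈ Dis op) {e : Q} (he : σ e = e) (f : Q) : σ f = f := by
  have hf_self : f ∈ disOrbit op f := self_mem_disOrbit f
  have hef : op e f ∈ disOrbit op f := op_mem_disOrbit hQ e hf_self
  obtain ⟨u, hu, huf0⟩ := (hlatin f f hf_self).surjOn hef
  have huf : op u f = op e f := huf0
  have hconjapp : ∀ v : Q, ∀ δ : Equiv.Perm Q,
      (Lp hQ v * δ * (Lp hQ v)⁻¹) (op v f) = op v (δ f) := by
    intro v δ
    simp only [Equiv.Perm.mul_apply]
    rw [show op v f = Lp hQ v f from rfl, perm_inv_apply_self (Lp hQ v)]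
    rfl
  have key : ∀ x ∈ disOrbit op f, op u x = op e x := by
    rintro x ⟨δ, hδ, rfl⟩
    have h1 := hconjapp u δ
    have h2 := hconjapp e δ
    rw [conj_indep hQ hM hδ u e, huf] at h1
    exact h1.symm.trans h2
  have hσf : σ f ∈ disOrbit op f := apply_mem_disOrbit hσ hf_self
  have hσu : σ u ∈ disOrbit op f := apply_mem_disOrbit hσ hu
  have heq : op (σ u) (σ f) = op u (σ f) := by
    have h3 : σ (op u f) = op (σ u) (σ f) := isHom_dis hQ hσ u f
    have h4 : σ (op e f) = op e (σ f) := by rw [isHom_dis hQ hσ e f, he]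
    rw [huf, h4] at h3
    rw [← h3]
    exact (key (σ f) hσf).symm
  have hσu_eq : σ u = u := (hlatin f (σ f) hσf).injOn hσu hu heq
  obtain ⟨δ, hδ, hδu⟩ := hu
  have h5 : σ * δ = δ * σ := dis_comm hQ hM hσ hδ
  have h6 : δ (σ f) = δ f := by
    have hs : σ (δ f) = δ f := by rw [hδu]; exact hσu_eq
    calc δ (σ f) = (δ * σ) f := rfl
      _ = (σ * δ) f := by rw [h5]
      _ = σ (δ f) := rfl
      _ = δ f := hs
  exact δ.injective h6

end Prop52

/-- Proposition 5.2: in a medial quandle in which all orbits are latin,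
(1) all orbit groups are isomorphic (there is a bijection between any two orbits
sending `e` to `f` and preserving the orbit group addition `α(e) + β(e) = (αβ)(e)`),
and (2) all orbits are isomorphic as quandles. -/
theorem latin_orbits_isomorphic {Q : Type*} (op : Q → Q → Q)
    (hQ : IsQuandle op) (hM : IsMedial op)
    (hlatin : ∀ e : Q, ∀ a ∈ disOrbit op e,
      Set.BijOn (fun x => op x a) (disOrbit op e) (disOrbit op e)) :
    (∀ e f : Q, ∃ ψ : Q → Q,
      Set.BijOn ψ (disOrbit op e) (disOrbit op f) ∧ ψ e = f ∧
      ∀ α β γ δ : Equiv.Perm Q, α ∈ Dis op → β ∈ Dis op → γ ∈ Dis op → δ ∈ Dis op →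
        ψ (α e) = γ f → ψ (β e) = δ f → ψ ((α * β) e) = (γ * δ) f) ∧
    (∀ e f : Q, ∃ ψ : Q → Q,
      Set.BijOn ψ (disOrbit op e) (disOrbit op f) ∧
      ∀ a ∈ disOrbit op e, ∀ b ∈ disOrbit op e, ψ (op a b) = op (ψ a) (ψ b)) := by
  classical
  have welldef : ∀ e f : Q, ∀ σ ∈ Dis op, ∀ τ ∈ Dis op, σ e = τ e → σ f = τ f := by
    intro e f σ hσ τ hτ h
    have h1 : (τ⁻¹ * σ) e = e := by
      simp only [Equiv.Perm.mul_apply, h]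
      exact Prop52.perm_inv_apply_self τ e
    have h2 := Prop52.fix_transfer hQ hM hlatin (mul_mem (inv_mem hτ) hσ) h1 f
    have h3 := congrArg τ h2
    simpa [Equiv.Perm.mul_apply] using h3
  have main : ∀ e f : Q, ∃ ψ : Q → Q,
      (∀ σ ∈ Dis op, ψ (σ e) = σ f) ∧ Set.BijOn ψ (disOrbit op e) (disOrbit op f) := by
    intro e f
    refine ⟨fun x => if h : ∃ σ ∈ Dis op, σ e = x then h.choose f else x, ?_⟩
    have hψ : ∀ σ ∈ Dis op,
        (fun x => if h : ∃ σ ∈ Dis op, σ e = x then h.choose f else x) (σ e) = σ f := by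
      intro σ hσ
      have hex : ∃ τ ∈ Dis op, τ e = σ e := ⟨σ, hσ, rfl⟩
      show (if h : ∃ τ ∈ Dis op, τ e = σ e then h.choose f else σ e) = σ f
      rw [dif_pos hex]
      exact welldef e f _ hex.choose_spec.1 σ hσ hex.choose_spec.2
    refine ⟨hψ, ?_, ?_, ?_⟩
    · rintro x ⟨σ, hσ, rfl⟩
      rw [hψ σ hσ]
      exact ⟨σ, hσ, rfl⟩
    · rintro x ⟨σ, hσ, rfl⟩ y ⟨τ, hτ, rfl⟩ h
      rw [hψ σ hσ, hψ τ hτ] at h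
      exact welldef f e σ hσ τ hτ h
    · rintro y ⟨σ, hσ, rfl⟩
      exact ⟨σ e, ⟨σ, hσ, rfl⟩, hψ σ hσ⟩
  constructor
  · intro e f
    obtain ⟨ψ, hψ, hbij⟩ := main e f
    refine ⟨ψ, hbij, ?_, ?_⟩
    · have := hψ 1 (one_mem _)
      simpa using this
    · intro α β γ δ hα hβ hγ hδ h1 h2
      rw [hψ α hα] at h1
      rw [hψ β hβ] at h2
      rw [hψ (α * β) (mul_mem hα hβ)]
      calc (α * β) f = α (β f) := rfl
        _ = α (δ f) := by rw [h2]
        _ = (α * δ) f := rfl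
        _ = (δ * α) f := by rw [Prop52.dis_comm hQ hM hα hδ]
        _ = δ (α f) := rfl
        _ = δ (γ f) := by rw [h1]
        _ = (δ * γ) f := rfl
        _ = (γ * δ) f := by rw [Prop52.dis_comm hQ hM hδ hγ]
  · intro e f
    obtain ⟨ψ, hψ, hbij⟩ := main e f
    refine ⟨ψ, hbij, ?_⟩
    rintro a ⟨α, hα, rfl⟩ b ⟨β, hβ, rfl⟩
    have hδ : α⁻¹ * β ∈ Dis op := mul_mem (inv_mem hα) hβ
    have hτ : Prop52.Lp hQ f * (α⁻¹ * β) * (Prop52.Lp hQ f)⁻¹ ∈ Dis op :=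
      Prop52.conj_mem_Dis hQ hδ f
    have hLe : (Prop52.Lp hQ e)⁻¹ e = e := Prop52.Lp_inv_self hQ e
    have hLf : (Prop52.Lp hQ f)⁻¹ f = f := Prop52.Lp_inv_self hQ f
    have hconjαe := Prop52.hom_conj hQ (Prop52.isHom_dis hQ hα) e
    have hconjαf := Prop52.hom_conj hQ (Prop52.isHom_dis hQ hα) f
    have step1 : op (α e) (β e)
        = (α * (Prop52.Lp hQ f * (α⁻¹ * β) * (Prop52.Lp hQ f)⁻¹)) e := by
      rw [← Prop52.conj_indep hQ hM hδ e f]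
      calc op (α e) (β e) = Prop52.Lp hQ (α e) (β e) := rfl
        _ = (α * Prop52.Lp hQ e * α⁻¹) (β e) := by rw [hconjαe]
        _ = α (Prop52.Lp hQ e ((α⁻¹ * β) e)) := rfl
        _ = α (Prop52.Lp hQ e ((α⁻¹ * β) ((Prop52.Lp hQ e)⁻¹ e))) := by rw [hLe]
        _ = (α * (Prop52.Lp hQ e * (α⁻¹ * β) * (Prop52.Lp hQ e)⁻¹)) e := rfl
    have step2 : (α * (Prop52.Lp hQ f * (α⁻¹ * β) * (Prop52.Lp hQ f)⁻¹)) f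
        = op (α f) (β f) := by
      calc (α * (Prop52.Lp hQ f * (α⁻¹ * β) * (Prop52.Lp hQ f)⁻¹)) f
          = α (Prop52.Lp hQ f ((α⁻¹ * β) ((Prop52.Lp hQ f)⁻¹ f))) := rfl
        _ = α (Prop52.Lp hQ f ((α⁻¹ * β) f)) := by rw [hLf]
        _ = (α * Prop52.Lp hQ f * α⁻¹) (β f) := rfl
        _ = Prop52.Lp hQ (α f) (β f) := by rw [hconjαf]
        _ = op (α f) (β f) := rfl
    rw [step1, hψ _ (mul_mem hα hτ), hψ α hα, hψ β hβ]
    exact step2
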